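/- Let (A, m) be a Noetherian local ring whose maximal ideal m is generated by two elements a and b, and let u be a unit of A. Set B = A[X]/(X² − a·u). Then B is a (Noetherian) local ring whose maximal ideal is generated by the images of X and b, and the Krull dimension of B equals the Krull dimension of A. In particular, if A has Krull dimension 2 (so that A is a 2-dimensional regular local ring), then B is a local ring of Krull dimension 2 whose maximal ideal is generated by two elements, i.e., B is regular. -/

import Mathlib

open Polynomial AdjoinRoot IsLocalRing

/-- for a Noetherian local ring `(A, m)` with `m = (a, b)` and a unit `u`,
`B = A[X]/(X² - a·u)` is a Noetherian local ring whose maximal ideal is generated by the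
images of `X` and `b`, and `dim B = dim A`; in particular if `dim A = 2` then `B` is
regular (its maximal ideal is generated by `dim B = 2` elements). -/
theorem stmt_17
    (A : Type*) [CommRing A] [IsLocalRing A] [IsNoetherianRing A]
    (a b : A) (hm : IsLocalRing.maximalIdeal A = Ideal.span {a, b})
    (u : A) (hu : IsUnit u) :
    IsNoetherianRing (AdjoinRoot ((Polynomial.X ^ 2 - Polynomial.C (a * u) : Polynomial A))) ∧
    ∃ h : IsLocalRing (AdjoinRoot ((Polynomial.X ^ 2 - Polynomial.C (a * u) : Polynomial A))),
      @IsLocalRing.maximalIdeal _ _ h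
          = Ideal.span {AdjoinRoot.root ((Polynomial.X ^ 2 - Polynomial.C (a * u) : Polynomial A)),
              algebraMap A (AdjoinRoot ((Polynomial.X ^ 2 - Polynomial.C (a * u) : Polynomial A))) b}
        ∧ ringKrullDim (AdjoinRoot ((Polynomial.X ^ 2 - Polynomial.C (a * u) : Polynomial A)))
            = ringKrullDim A := by
  set f : Polynomial A := X ^ 2 - C (a * u) with hfdef
  set B := AdjoinRoot f with hBdef
  have hmon : f.Monic := monic_X_pow_sub_C (a * u) (by norm_num)
  have hdeg : f.degree = 2 := by
    simpa [hfdef] using degree_X_pow_sub_C (n := 2) (by norm_num) (a * u)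
  have hndeg : f.natDegree = 2 := by rw [hfdef]; exact natDegree_X_pow_sub_C
  have hfne1 : f ≠ 1 := fun h1 => by rw [h1] at hndeg; simp at hndeg
  -- membership facts
  have hamem : a ∈ maximalIdeal A := by
    rw [hm]; exact Ideal.subset_span (by simp)
  have hbmem : b ∈ maximalIdeal A := by
    rw [hm]; exact Ideal.subset_span (by simp)
  have haumem : a * u ∈ maximalIdeal A := Ideal.mul_mem_right _ _ hamem
  -- the square of the root
  have hroot2 : (root f) ^ 2 = of f (a * u) := by
    have h0 : mk f f = 0 := mk_self
    rw [hfdef, map_sub, map_pow, mk_X, mk_C, sub_eq_zero] at h0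
    exact h0
  -- representation of elements of B
  have rep : ∀ z : B, ∃ c d : A, z = of f c + of f d * root f := by
    intro z
    obtain ⟨p, rfl⟩ := mk_surjective z
    have h1 : mk f p = mk f (p %ₘ f) := by
      conv_lhs => rw [← p.modByMonic_add_div f]
      rw [map_add, map_mul, mk_self, zero_mul, add_zero]
    have hdeg' : (p %ₘ f).natDegree ≤ 1 := by
      have h2 := natDegree_modByMonic_lt p hmon hfne1
      omega
    refine ⟨(p %ₘ f).coeff 0, (p %ₘ f).coeff 1, ?_⟩
    rw [h1]
    conv_lhs => rw [eq_X_add_C_of_natDegree_le_one hdeg']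
    rw [map_add, map_mul, mk_C, mk_C, mk_X]
    ring
  -- unit criterion
  have hunit : ∀ c d : A, IsUnit c → IsUnit (of f c + of f d * root f) := by
    intro c d hc
    have key : (of f c + of f d * root f) * (of f c - of f d * root f)
        = of f (c ^ 2 - d ^ 2 * (a * u)) := by
      have : (of f c + of f d * root f) * (of f c - of f d * root f)
          = of f c ^ 2 - of f d ^ 2 * root f ^ 2 := by ring
      rw [this, hroot2, ← map_pow, ← map_pow, ← map_mul, ← map_sub]
    have hA : IsUnit (c ^ 2 - d ^ 2 * (a * u)) := by
      by_contra h
      have hmem : c ^ 2 - d ^ 2 * (a * u) ∈ maximalIdeal A := h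
      have hc2 : c ^ 2 ∈ maximalIdeal A := by
        have h3 := Ideal.add_mem _ hmem (Ideal.mul_mem_left _ (d ^ 2) haumem)
        rwa [sub_add_cancel] at h3
      exact (notMem_maximalIdeal.mpr (hc.pow 2)) hc2
    exact isUnit_of_mul_isUnit_left (by rw [key]; exact hA.map (of f))
  -- residue map
  have heval : f.eval₂ (residue A) 0 = 0 := by
    rw [hfdef, eval₂_sub, eval₂_pow, eval₂_X, eval₂_C, zero_pow (by norm_num : 2 ≠ 0),
      zero_sub, neg_eq_zero]
    exact Ideal.Quotient.eq_zero_iff_mem.mpr haumem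
  set φ : B →+* ResidueField A := AdjoinRoot.lift (residue A) 0 heval with hφdef
  have hnt : Nontrivial B := by
    refine ⟨⟨1, 0, fun h => one_ne_zero (α := ResidueField A) ?_⟩⟩
    have := congrArg φ h
    simpa using this
  -- local ring
  have hloc : IsLocalRing B := by
    refine IsLocalRing.of_isUnit_or_isUnit_one_sub_self fun z => ?_
    obtain ⟨c, d, rfl⟩ := rep z
    by_cases hc : c ∈ maximalIdeal A
    · right
      have h1 : (1 : B) - (of f c + of f d * root f)
          = of f (1 - c) + of f (-d) * root f := by
        rw [map_sub, map_one, map_neg]; ring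
      rw [h1]
      exact hunit _ _ (isUnit_one_sub_self_of_mem_nonunits c hc)
    · left
      exact hunit _ _ (notMem_maximalIdeal.mp hc)
  letI := hloc
  -- the candidate maximal ideal
  set M : Ideal B := Ideal.span {root f, of f b} with hMdef
  have hrootM : root f ∈ M := Ideal.subset_span (by simp)
  have hbM : of f b ∈ M := Ideal.subset_span (by simp)
  have haM : of f a ∈ M := by
    obtain ⟨v, hv⟩ : ∃ v, u * v = 1 := ⟨↑hu.unit⁻¹, hu.mul_val_inv⟩
    have : of f a = root f ^ 2 * of f v := by
      rw [hroot2, ← map_mul]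
      congr 1
      rw [mul_assoc, hv, mul_one]
    rw [this]
    exact Ideal.mul_mem_right _ _ (Ideal.pow_mem_of_mem _ hrootM 2 (by norm_num))
  have hMne : M ≠ ⊤ := by
    intro hM
    have h1M : (1 : B) ∈ M := hM ▸ Submodule.mem_top
    have hker : M ≤ RingHom.ker φ := by
      rw [hMdef, Ideal.span_le]
      rintro x (rfl | rfl)
      · rw [SetLike.mem_coe, RingHom.mem_ker, hφdef, AdjoinRoot.lift_root]
      · rw [SetLike.mem_coe, RingHom.mem_ker, hφdef]
        show ((AdjoinRoot.lift (residue A) 0 heval).comp (of f)) b = 0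
        rw [AdjoinRoot.lift_comp_of]
        exact Ideal.Quotient.eq_zero_iff_mem.mpr hbmem
    have := hker h1M
    rw [RingHom.mem_ker, map_one] at this
    exact one_ne_zero this
  have hMmax : maximalIdeal B = M := by
    refine le_antisymm ?_ (le_maximalIdeal hMne)
    intro z hz
    obtain ⟨c, d, rfl⟩ := rep z
    have hc : c ∈ maximalIdeal A := by
      by_contra hc
      exact hz (hunit _ _ (notMem_maximalIdeal.mp hc))
    rw [hm] at hc
    obtain ⟨x, y, hxy⟩ := Ideal.mem_span_pair.mp hc
    have : of f c = of f x * of f a + of f y * of f b := by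
      rw [← map_mul, ← map_mul, ← map_add, hxy]
    rw [this]
    exact Ideal.add_mem _
      (Ideal.add_mem _ (Ideal.mul_mem_left _ _ haM) (Ideal.mul_mem_left _ _ hbM))
      (Ideal.mul_mem_left _ _ hrootM)
  -- integrality and injectivity
  letI : Module.Finite A B := Module.Finite.of_basis (AdjoinRoot.powerBasis' hmon).basis
  haveI : Algebra.IsIntegral A B := Algebra.IsIntegral.of_finite A B
  have hinj : Function.Injective (algebraMap A B) := by
    rw [RingHom.injective_iff_ker_eq_bot, eq_bot_iff]
    intro x hx
    rw [RingHom.mem_ker, AdjoinRoot.algebraMap_eq, AdjoinRoot.of, RingHom.comp_apply,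
      AdjoinRoot.mk_eq_zero] at hx
    have h0 : (C x) %ₘ f = 0 := (modByMonic_eq_zero_iff_dvd hmon).mpr hx
    have hself : (C x) %ₘ f = C x := (modByMonic_eq_self_iff hmon).mpr
      (lt_of_le_of_lt degree_C_le (by rw [hdeg]; norm_num))
    rw [hself] at h0
    simpa using congrArg (fun p => Polynomial.coeff p 0) h0
  -- dim B ≤ dim A
  have hdim1 : ringKrullDim B ≤ ringKrullDim A := by
    refine Order.krullDim_le_of_strictMono
      (fun Q : PrimeSpectrum B => ⟨Q.asIdeal.comap (algebraMap A B), inferInstance⟩) ?_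
    intro Q Q' hlt
    rw [← PrimeSpectrum.asIdeal_lt_asIdeal] at hlt
    obtain ⟨hle, x, hxJ, hxI⟩ := SetLike.lt_iff_le_and_exists.mp hlt
    rw [← PrimeSpectrum.asIdeal_lt_asIdeal]
    exact Ideal.comap_lt_comap_of_integral_mem_sdiff (I := Q.asIdeal) hle ⟨hxJ, hxI⟩
      (Algebra.IsIntegral.isIntegral x)
  -- dim A ≤ dim B : lifting chains by going-up
  have hlift : ∀ n (p : LTSeries (PrimeSpectrum A)), p.length = n →
      ∃ q : LTSeries (PrimeSpectrum B), q.length = p.length ∧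
        q.last.asIdeal.comap (algebraMap A B) = p.last.asIdeal := by
    intro n
    induction n with
    | zero =>
      intro p hp
      obtain ⟨Q, -, hQp, hQc⟩ := Ideal.exists_ideal_over_prime_of_isIntegral
        p.last.asIdeal (⊥ : Ideal B) (by
          rw [← RingHom.ker_eq_comap_bot, (RingHom.injective_iff_ker_eq_bot _).mp hinj]
          exact bot_le)
      exact ⟨RelSeries.singleton _ ⟨Q, hQp⟩, by simp [hp], hQc⟩
    | succ n ih =>
      intro p hp
      obtain ⟨q, hql, hqc⟩ := ih p.eraseLast (by simp [hp])
      have hstep : p.eraseLast.last < p.last :=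
        p.eraseLast_last_rel_last (by omega)
      obtain ⟨Q, hQge, hQp, hQc⟩ := Ideal.exists_ideal_over_prime_of_isIntegral
        p.last.asIdeal q.last.asIdeal (by
          rw [hqc]
          exact le_of_lt ((PrimeSpectrum.asIdeal_lt_asIdeal _ _).mpr hstep))
      have hlt : q.last < (⟨Q, hQp⟩ : PrimeSpectrum B) := by
        rw [← PrimeSpectrum.asIdeal_lt_asIdeal]
        refine lt_of_le_of_ne hQge fun h => ?_
        have : p.eraseLast.last.asIdeal = p.last.asIdeal := by
          rw [← hqc, h, hQc]
        exact (ne_of_lt ((PrimeSpectrum.asIdeal_lt_asIdeal _ _).mpr hstep)) this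
      refine ⟨q.snoc ⟨Q, hQp⟩ hlt, ?_, ?_⟩
      · simp only [RelSeries.snoc_length, hql, RelSeries.eraseLast_length]
        omega
      · rw [RelSeries.last_snoc]; exact hQc
  have hdim2 : ringKrullDim A ≤ ringKrullDim B := by
    show Order.krullDim (PrimeSpectrum A) ≤ Order.krullDim (PrimeSpectrum B)
    refine iSup_le fun p => ?_
    obtain ⟨q, hql, -⟩ := hlift p.length p rfl
    calc (p.length : WithBot ℕ∞) = q.length := by rw [hql]
      _ ≤ Order.krullDim (PrimeSpectrum B) := Order.LTSeries.length_le_krullDim q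
  refine ⟨isNoetherianRing_of_surjective (Polynomial A) B (AdjoinRoot.mk f)
    AdjoinRoot.mk_surjective, hloc, ?_, le_antisymm hdim1 hdim2⟩
  rw [hMmax, hMdef, AdjoinRoot.algebraMap_eq]
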